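/- Let C be an essentially small category closed under finite limits, G : C → D a left exact functor, and Σ = { s ∈ Arrows(C) : G(s) is an isomorphism }. Then Σ admits a calculus of right fractions, and the induced functor Σ⁻¹C → D is conservative and left exact. -/

import Mathlib

open CategoryTheory Limits

namespace InvertedClassAux

variable {C : Type*} [Category C]

section Calculus

variable {D : Type*} [Category D]
  [HasFiniteLimits C] (G : C ⥤ D) [PreservesFiniteLimits G]
  (W : MorphismProperty C) (hW : ∀ {X Y : C} (s : X ⟶ Y), W s ↔ IsIso (G.map s))

include hW

theorem hasRightCalc : W.HasRightCalculusOfFractions := by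
  have hmul : W.IsMultiplicative :=
    { id_mem := fun X => (hW _).2 (by rw [G.map_id]; infer_instance)
      comp_mem := fun f g hf hg => (hW _).2 (by
        have := (hW f).1 hf
        have := (hW g).1 hg
        rw [G.map_comp]; infer_instance) }
  refine { exists_rightFraction := ?_, ext := ?_ }
  · intro X Y φ
    have hs : IsIso (G.map φ.s) := (hW _).1 φ.hs
    have sq : IsPullback (G.map (pullback.fst φ.f φ.s)) (G.map (pullback.snd φ.f φ.s))
        (G.map φ.f) (G.map φ.s) := (IsPullback.of_hasPullback φ.f φ.s).map G
    have sq2 : IsPullback (𝟙 (G.obj X)) (G.map φ.f ≫ inv (G.map φ.s))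
        (G.map φ.f) (G.map φ.s) := IsPullback.of_horiz_isIso ⟨by simp⟩
    have hfst : IsIso (G.map (pullback.fst φ.f φ.s)) := by
      have h := sq.isoIsPullback_hom_fst _ _ sq2
      rw [Category.comp_id] at h
      rw [← h]; infer_instance
    exact ⟨⟨pullback.fst φ.f φ.s, (hW _).2 hfst, pullback.snd φ.f φ.s⟩, pullback.condition⟩
  · intro X Y Y' f₁ f₂ s hs heq
    have hGs : IsIso (G.map s) := (hW _).1 hs
    have hf : G.map f₁ = G.map f₂ := by
      rw [← cancel_mono (G.map s), ← G.map_comp, ← G.map_comp, heq]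
    have hl := isLimitOfHasEqualizerOfPreservesLimit G f₁ f₂
    have := isIso_limit_cone_parallelPair_of_eq hf hl
    have hι : IsIso (G.map (equalizer.ι f₁ f₂)) := by simpa using this
    exact ⟨_, equalizer.ι f₁ f₂, (hW _).2 hι, equalizer.condition f₁ f₂⟩

end Calculus

section Fractions

variable {E : Type*} [Category E] (L : C ⥤ E) (W : MorphismProperty C)
  [L.IsLocalization W] [W.HasRightCalculusOfFractions]

lemma common_denom {A : C} {ι : Type*} {X : ι → C}
    (φ : ∀ i, L.obj A ⟶ L.obj (X i)) (l : List ι) :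
    ∃ (A' : C) (s : A' ⟶ A) (_ : W s),
      ∀ i ∈ l, ∃ f : A' ⟶ X i, L.map s ≫ φ i = L.map f := by
  induction l with
  | nil => exact ⟨A, 𝟙 A, W.id_mem A, by simp⟩
  | cons j l ih =>
    obtain ⟨A', s, hs, h⟩ := ih
    obtain ⟨ρ, hρ⟩ := Localization.exists_rightFraction L W (L.map s ≫ φ j)
    refine ⟨ρ.X', ρ.s ≫ s, W.comp_mem _ _ ρ.hs hs, ?_⟩
    intro i hi
    rw [List.mem_cons] at hi
    obtain rfl | hi := hi
    · exact ⟨ρ.f, by rw [L.map_comp, Category.assoc, hρ,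
        MorphismProperty.RightFraction.map_s_comp_map]⟩
    · obtain ⟨f, hf⟩ := h i hi
      exact ⟨ρ.s ≫ f, by rw [L.map_comp, Category.assoc, hf, L.map_comp]⟩

lemma common_precomp_eq {A : C} {ι : Type*} {X : ι → C}
    (u v : ∀ i, A ⟶ X i) (h : ∀ i, L.map (u i) = L.map (v i)) (l : List ι) :
    ∃ (A' : C) (t : A' ⟶ A) (_ : W t), ∀ i ∈ l, t ≫ u i = t ≫ v i := by
  induction l with
  | nil => exact ⟨A, 𝟙 A, W.id_mem A, by simp⟩
  | cons j l ih =>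
    obtain ⟨A', t, ht, h'⟩ := ih
    have : L.map (t ≫ u j) = L.map (t ≫ v j) := by rw [L.map_comp, L.map_comp, h j]
    obtain ⟨A'', r, hr, hr'⟩ := (MorphismProperty.map_eq_iff_precomp L W _ _).1 this
    refine ⟨A'', r ≫ t, W.comp_mem _ _ hr ht, ?_⟩
    intro i hi
    rw [List.mem_cons] at hi
    obtain rfl | hi := hi
    · simpa [Category.assoc] using hr'
    · rw [Category.assoc, Category.assoc, h' i hi]

variable {J : Type} [SmallCategory J] [FinCategory J]

include W in
noncomputable def isLimit_mapCone {K : J ⥤ C} {c : Cone K} (hc : IsLimit c) :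
    IsLimit (L.mapCone c) := by
  have := Localization.essSurj L W
  -- existence part, for an apex of the form `L.obj A`
  have key : ∀ (A : C) (φ : ∀ j, L.obj A ⟶ L.obj (K.obj j)),
      (∀ {j j' : J} (u : j ⟶ j'), φ j ≫ L.map (K.map u) = φ j') →
      ∃ χ : L.obj A ⟶ L.obj c.pt, ∀ j, χ ≫ L.map (c.π.app j) = φ j := by
    intro A φ hφ
    obtain ⟨A', s, hs, hd⟩ := common_denom L W φ (Finset.univ : Finset J).toList
    have hd' : ∀ j : J, ∃ f : A' ⟶ K.obj j, L.map s ≫ φ j = L.map f := fun j =>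
      hd j (Finset.mem_toList.2 (Finset.mem_univ _))
    choose f hf using hd'
    -- equalize the naturality defects
    set ι₂ := Σ (p : J × J), p.1 ⟶ p.2 with hι₂
    have heq : ∀ q : ι₂, L.map (f q.1.1 ≫ K.map q.2) = L.map (f q.1.2) := by
      rintro ⟨⟨j, j'⟩, u⟩
      dsimp
      rw [L.map_comp, ← hf j, ← hf j', Category.assoc, hφ u]
    obtain ⟨A'', t, ht, hnat⟩ := common_precomp_eq L W
      (fun q : ι₂ => f q.1.1 ≫ K.map q.2) (fun q : ι₂ => f q.1.2) heq
      (Finset.univ : Finset ι₂).toList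
    have hnat' : ∀ {j j' : J} (u : j ⟶ j'), (t ≫ f j) ≫ K.map u = t ≫ f j' := by
      intro j j' u
      rw [Category.assoc]
      exact hnat ⟨⟨j, j'⟩, u⟩ (Finset.mem_toList.2 (Finset.mem_univ _))
    let c' : Cone K :=
      { pt := A''
        π := { app := fun j => t ≫ f j
               naturality := fun j j' u => by
                 dsimp
                 rw [Category.id_comp, hnat' u] } }
    have hts : W (t ≫ s) := W.comp_mem _ _ ht hs
    have : IsIso (L.map (t ≫ s)) := Localization.inverts L W _ hts
    refine ⟨inv (L.map (t ≫ s)) ≫ L.map (hc.lift c'), fun j => ?_⟩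
    rw [Category.assoc, ← L.map_comp, hc.fac c' j]
    show inv (L.map (t ≫ s)) ≫ L.map (t ≫ f j) = φ j
    rw [IsIso.inv_comp_eq, L.map_comp, L.map_comp, Category.assoc, ← hf j]
  -- uniqueness part, for an apex of the form `L.obj A`
  have keyU : ∀ (A : C) (χ₁ χ₂ : L.obj A ⟶ L.obj c.pt),
      (∀ j, χ₁ ≫ L.map (c.π.app j) = χ₂ ≫ L.map (c.π.app j)) → χ₁ = χ₂ := by
    intro A χ₁ χ₂ hχ
    obtain ⟨A', s, hs, hd⟩ := common_denom L W
      (fun b : Bool => if b then χ₁ else χ₂) [true, false]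
    obtain ⟨h₁, hh₁⟩ := hd true (by simp)
    obtain ⟨h₂, hh₂⟩ := hd false (by simp)
    simp only [if_true, if_false, Bool.false_eq_true] at hh₁ hh₂
    have heq : ∀ j : J, L.map (h₁ ≫ c.π.app j) = L.map (h₂ ≫ c.π.app j) := by
      intro j
      rw [L.map_comp, L.map_comp, ← hh₁, ← hh₂, Category.assoc, Category.assoc, hχ j]
    obtain ⟨A'', t, ht, hre⟩ := common_precomp_eq L W
      (fun j : J => h₁ ≫ c.π.app j) (fun j : J => h₂ ≫ c.π.app j) heq
      (Finset.univ : Finset J).toList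
    have hth : t ≫ h₁ = t ≫ h₂ := hc.hom_ext (fun j => by
      rw [Category.assoc, Category.assoc]
      exact hre j (Finset.mem_toList.2 (Finset.mem_univ _)))
    have hLh : L.map h₁ = L.map h₂ := by
      have h5 : L.map (t ≫ h₁) = L.map (t ≫ h₂) := by rw [hth]
      rw [L.map_comp, L.map_comp] at h5
      have := Localization.inverts L W _ ht
      exact (cancel_epi (L.map t)).1 h5
    have := Localization.inverts L W _ hs
    rw [← cancel_epi (L.map s), hh₁, hh₂, hLh]
  have hw : ∀ (d : Cone (K ⋙ L)) {j j' : J} (u : j ⟶ j'),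
      d.π.app j ≫ L.map (K.map u) = d.π.app j' := fun d {j j'} u => d.w u
  have hKey := fun (d : Cone (K ⋙ L)) => key (L.objPreimage d.pt)
    (fun j => (L.objObjPreimageIso d.pt).hom ≫ d.π.app j)
    (fun {j j'} u => by rw [Category.assoc, hw d u])
  refine IsLimit.mk (fun d => (L.objObjPreimageIso d.pt).inv ≫ (hKey d).choose) ?_ ?_
  · intro d j
    simp only [Functor.mapCone_π_app]
    rw [Category.assoc, (hKey d).choose_spec j, Iso.inv_hom_id_assoc]
  · intro d m hm
    simp only [Functor.mapCone_π_app] at hm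
    rw [Iso.eq_inv_comp]
    refine keyU _ _ _ (fun j => ?_)
    rw [Category.assoc, hm j, (hKey d).choose_spec j]

section Limits

variable [HasFiniteLimits C]

include L W in
lemma isTerminal_obj : Nonempty (IsTerminal (L.obj (⊤_ C))) :=
  ⟨isLimitChangeEmptyCone E (isLimit_mapCone L W terminalIsTerminal)
    (asEmptyCone (L.obj (⊤_ C))) (Iso.refl _)⟩

include L W in
lemma hasTerminal_loc : HasTerminal E :=
  (isTerminal_obj L W).some.hasTerminal

include L W in
lemma exists_cospan_iso {X Y Z : E} (f : X ⟶ Z) (g : Y ⟶ Z) :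
    ∃ (X₀ Y₀ Z₀ : C) (f₀ : X₀ ⟶ Z₀) (g₀ : Y₀ ⟶ Z₀),
      Nonempty ((cospan f₀ g₀ ⋙ L) ≅ cospan f g) := by
  have := Localization.essSurj L W
  let eX := L.objObjPreimageIso X
  let eY := L.objObjPreimageIso Y
  let eZ := L.objObjPreimageIso Z
  obtain ⟨φ, hφ⟩ := Localization.exists_rightFraction L W (eX.hom ≫ f ≫ eZ.inv)
  obtain ⟨ψ, hψ⟩ := Localization.exists_rightFraction L W (eY.hom ≫ g ≫ eZ.inv)
  refine ⟨_, _, _, φ.f, ψ.f, ⟨cospanCompIso L φ.f ψ.f ≪≫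
    cospanExt (Localization.isoOfHom L W φ.s φ.hs ≪≫ eX)
      (Localization.isoOfHom L W ψ.s ψ.hs ≪≫ eY) eZ ?_ ?_⟩⟩
  · have h1 : eX.hom ≫ f = φ.map L (Localization.inverts L W) ≫ eZ.hom := by
      rw [← hφ]; simp
    simp only [Iso.trans_hom, Localization.isoOfHom_hom, Category.assoc, h1,
      MorphismProperty.RightFraction.map_s_comp_map_assoc]
  · have h1 : eY.hom ≫ g = ψ.map L (Localization.inverts L W) ≫ eZ.hom := by
      rw [← hψ]; simp
    simp only [Iso.trans_hom, Localization.isoOfHom_hom, Category.assoc, h1,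
      MorphismProperty.RightFraction.map_s_comp_map_assoc]

include L W in
lemma hasPullbacks_loc : HasPullbacks E := by
  have hlim : ∀ {X Y Z : E} (f : X ⟶ Z) (g : Y ⟶ Z), HasLimit (cospan f g) := by
    intro X Y Z f g
    obtain ⟨X₀, Y₀, Z₀, f₀, g₀, ⟨e⟩⟩ := exists_cospan_iso L W f g
    have : HasLimit (cospan f₀ g₀ ⋙ L) :=
      HasLimit.mk ⟨L.mapCone (limit.cone (cospan f₀ g₀)),
        isLimit_mapCone L W (limit.isLimit _)⟩
    exact hasLimit_of_iso e
  exact ⟨fun F => hasLimit_of_iso (diagramIsoCospan F).symm⟩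

variable {D : Type*} [Category D] (G : C ⥤ D) [PreservesFiniteLimits G]
  (F' : E ⥤ D) [Localization.Lifting L W G F']

include L W G in
lemma preservesEmpty : PreservesLimitsOfShape (Discrete PEmpty.{1}) F' := by
  have hE : HasTerminal E := hasTerminal_loc L W
  have μ : L ⋙ F' ≅ G := Localization.Lifting.iso L W G F'
  constructor
  intro K
  have h1 : IsTerminal (limit K) :=
    isLimitChangeEmptyCone E (limit.isLimit K) (asEmptyCone _) (Iso.refl _)
  have e1 : limit K ≅ L.obj (⊤_ C) := h1.uniqueUpToIso (isTerminal_obj L W).some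
  have hGT : IsTerminal (G.obj (⊤_ C)) :=
    isLimitChangeEmptyCone D (isLimitOfPreserves G terminalIsTerminal)
      (asEmptyCone _) (Iso.refl _)
  have hF'T : IsTerminal (F'.obj (limit K)) :=
    hGT.ofIso (μ.symm.app (⊤_ C) ≪≫ F'.mapIso e1.symm)
  exact preservesLimit_of_preserves_limit_cone (limit.isLimit K)
    (isLimitChangeEmptyCone D hF'T (F'.mapCone (limit.cone K)) (Iso.refl _))

include L W G in
lemma preservesCospans : PreservesLimitsOfShape WalkingCospan F' := by
  have μ : L ⋙ F' ≅ G := Localization.Lifting.iso L W G F'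
  have base : ∀ {X₀ Y₀ Z₀ : C} (f₀ : X₀ ⟶ Z₀) (g₀ : Y₀ ⟶ Z₀),
      PreservesLimit (cospan f₀ g₀ ⋙ L) F' := by
    intro X₀ Y₀ Z₀ f₀ g₀
    have hc := limit.isLimit (cospan f₀ g₀)
    have hLc : IsLimit (L.mapCone (limit.cone (cospan f₀ g₀))) := isLimit_mapCone L W hc
    have hGc : IsLimit (G.mapCone (limit.cone (cospan f₀ g₀))) := isLimitOfPreserves G hc
    have hF'Lc : IsLimit ((L ⋙ F').mapCone (limit.cone (cospan f₀ g₀))) :=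
      IsLimit.mapConeEquiv μ.symm hGc
    exact preservesLimit_of_preserves_limit_cone hLc hF'Lc
  constructor
  intro K
  have : PreservesLimit (cospan (K.map WalkingCospan.Hom.inl)
      (K.map WalkingCospan.Hom.inr)) F' := by
    obtain ⟨X₀, Y₀, Z₀, f₀, g₀, ⟨e⟩⟩ := exists_cospan_iso L W
      (K.map WalkingCospan.Hom.inl) (K.map WalkingCospan.Hom.inr)
    have := base f₀ g₀
    exact preservesLimit_of_iso_diagram F' e
  exact preservesLimit_of_iso_diagram F' (diagramIsoCospan K).symm

include L W G in
lemma preservesFiniteLimits_lifted : PreservesFiniteLimits F' := by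
  have hT : HasTerminal E := hasTerminal_loc L W
  have hP : HasPullbacks E := hasPullbacks_loc L W
  have h1 := preservesEmpty L W G F'
  have h2 := preservesCospans L W G F'
  exact preservesFiniteLimits_of_preservesTerminal_and_pullbacks F'

end Limits

section Reflects

variable {D : Type*} [Category D] (G : C ⥤ D)
  (F' : E ⥤ D) [Localization.Lifting L W G F']

include L W in
lemma reflectsIso_lifted (hW : ∀ {X Y : C} (s : X ⟶ Y), W s ↔ IsIso (G.map s)) :
    F'.ReflectsIsomorphisms := by
  have μ : L ⋙ F' ≅ G := Localization.Lifting.iso L W G F'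
  have := Localization.essSurj L W
  constructor
  intro A B φ hφ
  let eA := L.objObjPreimageIso A
  let eB := L.objObjPreimageIso B
  obtain ⟨ρ, hρ⟩ := Localization.exists_rightFraction L W (eA.hom ≫ φ ≫ eB.inv)
  have hs : IsIso (L.map ρ.s) := Localization.inverts L W _ ρ.hs
  have h1 : IsIso (F'.map (eA.hom ≫ φ ≫ eB.inv)) := by
    rw [F'.map_comp, F'.map_comp]; infer_instance
  have h2 : IsIso (F'.map (L.map ρ.f)) := by
    rw [← MorphismProperty.RightFraction.map_s_comp_map ρ L (Localization.inverts L W),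
      F'.map_comp, ← hρ]
    infer_instance
  have h2' : IsIso ((L ⋙ F').map ρ.f) := h2
  have h3 : IsIso (G.map ρ.f) := by
    have hn := μ.hom.naturality ρ.f
    have heq : G.map ρ.f = inv (μ.hom.app _) ≫ (L ⋙ F').map ρ.f ≫ μ.hom.app _ := by
      rw [hn, IsIso.inv_hom_id_assoc]
    rw [heq]; infer_instance
  have h4 : IsIso (L.map ρ.f) := Localization.inverts L W _ ((hW _).2 h3)
  have h5 : IsIso (ρ.map L (Localization.inverts L W)) := by
    rw [show ρ.map L (Localization.inverts L W) = inv (L.map ρ.s) ≫ L.map ρ.f from by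
      rw [← MorphismProperty.RightFraction.map_s_comp_map ρ L (Localization.inverts L W),
        IsIso.inv_hom_id_assoc]]
    infer_instance
  rw [show φ = eA.inv ≫ (eA.hom ≫ φ ≫ eB.inv) ≫ eB.hom from by simp, hρ]
  infer_instance

end Reflects

end Fractions

end InvertedClassAux

open CategoryTheory Limits

/-- Let `C` be an essentially small category closed under finite limits, `G : C ⥤ D`
a left exact functor and `Σ` (here `W`) the class of morphisms inverted by `G`. Then
`Σ` admits a calculus of right fractions, and the induced functor `Σ⁻¹C ⥤ D`
(through which `G` factors) is conservative and left exact. -/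
theorem inverted_class_calculus_and_induced_functor
    {C D : Type*} [Category C] [Category D]
    [EssentiallySmall C] [HasFiniteLimits C]
    (G : C ⥤ D) [PreservesFiniteLimits G]
    (W : MorphismProperty C) (hW : ∀ {X Y : C} (s : X ⟶ Y), W s ↔ IsIso (G.map s))
    (hG : W.IsInvertedBy G) :
    W.HasRightCalculusOfFractions ∧
    (Localization.lift G hG W.Q).ReflectsIsomorphisms ∧
    Nonempty (PreservesFiniteLimits (Localization.lift G hG W.Q)) := by
  haveI hcalc : W.HasRightCalculusOfFractions := InvertedClassAux.hasRightCalc G W @hW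
  refine ⟨hcalc, ?_, ?_⟩
  · exact InvertedClassAux.reflectsIso_lifted W.Q W G (Localization.lift G hG W.Q) @hW
  · exact ⟨InvertedClassAux.preservesFiniteLimits_lifted W.Q W G (Localization.lift G hG W.Q)⟩
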